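/- CDCL with the DECISION learning scheme and ordered decision strategy is simulated by half-ordered resolution: if a clause D is learned from a state S = (ℂ, t) in CDCL(π-D, DECISION-L), then there is a π-half-ordered resolution derivation of a subclause of D from ℂ of length O(k²), where k is the number of unit-propagation steps in t used in the learning derivation. -/

import Mathlib

abbrev Var := ℕ
abbrev Lit := Var × Bool
abbrev Clause := Finset Lit

def Clause.vars (C : Clause) : Finset Var := C.image Prod.fst

abbrev Assignment := Var → Option Bool

def litSat (σ : Assignment) (l : Lit) : Prop := σ l.1 = some l.2
def litFalse (σ : Assignment) (l : Lit) : Prop := σ l.1 = some (!l.2)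

def Clause.falsified (σ : Assignment) (C : Clause) : Prop := ∀ l ∈ C, litFalse σ l

def resolve (x : Var) (C D : Clause) : Clause :=
  C.filter (fun l => l.1 ≠ x) ∪ D.filter (fun l => l.1 ≠ x)

def resolvableOn (x : Var) (C D : Clause) : Prop :=
  (∃ a : Bool, (x, a) ∈ C ∧ (x, !a) ∈ D) ∧
    ∀ (y : Var) (b : Bool), y ≠ x → (y, b) ∈ C → (y, !b) ∉ D
abbrev TEntry := Var × Bool × Bool

abbrev Trail := List TEntry

def Trail.assign (t : Trail) : Assignment :=
  fun x => (t.find? (fun e => e.1 == x)).map (fun e => e.2.1)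

def Trail.varList (t : Trail) : List Var := t.map (fun e => e.1)

def restrictedIsUnit (σ : Assignment) (C : Clause) (l : Lit) : Prop :=
  l ∈ C ∧ σ l.1 = none ∧ ∀ m ∈ C, m ≠ l → litFalse σ m
def prefixAssign (t : Trail) (k : ℕ) : Assignment := Trail.assign (t.take k)

def stepSet (𝒞 : Set Clause) (t : Trail) (k : ℕ) (prev : Set Clause) : Set Clause :=
  match t[k - 1]? with
  | none => prev
  | some e =>
      if e.2.2 then prev
      else
        {D ∈ prev | (e.1, !e.2.1) ∉ D} ∪
          {F | ∃ D ∈ prev, (e.1, !e.2.1) ∈ D ∧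
            ∃ C ∈ 𝒞, restrictedIsUnit (prefixAssign t (k - 1)) C (e.1, e.2.1) ∧
              F = resolve e.1 C D}

def CsetDown (𝒞 : Set Clause) (t : Trail) : ℕ → Set Clause
  | 0 => {D ∈ 𝒞 | Clause.falsified (Trail.assign t) D}
  | m + 1 => stepSet 𝒞 t (t.length - m) (CsetDown 𝒞 t m)
def ResStep (ok : Clause → Clause → Var → Prop) (prev : List Clause) (C : Clause) : Prop :=
  ∃ E ∈ prev, ∃ F ∈ prev, ∃ (x : Var) (a : Bool),
    (x, a) ∈ E ∧ (x, !a) ∈ F ∧ C = resolve x E F ∧ ok E F x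

def IsDeriv (τ : Set Clause) (ok : Clause → Clause → Var → Prop) (L : List Clause) : Prop :=
  ∀ i : Fin L.length, L.get i ∈ τ ∨ ResStep ok (L.take i.1) (L.get i)

def okHalf (π : Var → ℕ) (E F : Clause) (x : Var) : Prop :=
  (∀ y ∈ Clause.vars E, y ≠ x → π y < π x) ∨ (∀ y ∈ Clause.vars F, y ≠ x → π y < π x)

/-- The trail respects the ordered decision strategy π-D: every decision is made on
the π-smallest variable unassigned at that point. -/
def RespectsOrder (n : ℕ) (π : Var → ℕ) (t : Trail) : Prop :=
  ∀ (i : ℕ) (h : i < t.length), (t[i]'h).2.2 = true →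
    ∀ y : Var, y < n → y ∉ Trail.varList (t.take i) → π (t[i]'h).1 ≤ π y

def unitCount (t : Trail) : ℕ := (t.filter (fun e => !e.2.2)).length

section Aux

lemma mem_resolve {x : Var} {C D : Clause} {l : Lit} :
    l ∈ resolve x C D ↔ (l ∈ C ∨ l ∈ D) ∧ l.1 ≠ x := by
  simp only [resolve, Finset.mem_union, Finset.mem_filter]
  tauto

lemma varList_getElem {t : Trail} {j : ℕ} (h : j < t.length) :
    (Trail.varList t)[j]'(by simpa [Trail.varList] using h) = (t[j]'h).1 := by
  simp [Trail.varList]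

lemma var_ne_of_ne {t : Trail} (hnd : (Trail.varList t).Nodup) {i j : ℕ}
    (hi : i < t.length) (hj : j < t.length) (hij : i ≠ j) :
    (t[i]'hi).1 ≠ (t[j]'hj).1 := by
  intro h
  apply hij
  have h1 : (Trail.varList t)[i]'(by simpa [Trail.varList] using hi)
      = (Trail.varList t)[j]'(by simpa [Trail.varList] using hj) := by
    rw [varList_getElem hi, varList_getElem hj, h]
  exact (List.Nodup.getElem_inj_iff hnd).mp h1

lemma assign_of_mem {t : Trail} (hnd : (Trail.varList t).Nodup) {e : TEntry}
    (he : e ∈ t) : Trail.assign t e.1 = some e.2.1 := by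
  have hsome : (t.find? (fun f => f.1 == e.1)).isSome := by
    rw [List.find?_isSome]
    exact ⟨e, he, by simp⟩
  rcases Option.isSome_iff_exists.mp hsome with ⟨f, hf⟩
  have hfmem : f ∈ t := List.mem_of_find?_eq_some hf
  have hfeq : f.1 = e.1 := by simpa using List.find?_some hf
  rcases List.mem_iff_getElem.mp hfmem with ⟨i, hi, hie⟩
  rcases List.mem_iff_getElem.mp he with ⟨j, hj, hje⟩
  have hij : i = j := by
    by_contra hij
    exact var_ne_of_ne hnd hi hj hij (by rw [hie, hje, hfeq])
  have hfe : f = e := by subst hij; rw [← hie, ← hje]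
  simp [Trail.assign, hf, hfe]

lemma assign_append {l r : Trail} {x : Var} {c : Bool}
    (h : Trail.assign l x = some c) : Trail.assign (l ++ r) x = some c := by
  simp only [Trail.assign] at h ⊢
  rcases Option.map_eq_some_iff.mp h with ⟨e, he, hec⟩
  rw [List.find?_append, he]
  simp [hec]

lemma prefixAssign_mono {t : Trail} {q q' : ℕ} (hqq : q ≤ q') {x : Var} {c : Bool}
    (h : prefixAssign t q x = some c) : prefixAssign t q' x = some c := by
  have hpre : t.take q <+: t.take q' := by
    have := List.take_prefix q (t.take q')
    rwa [List.take_take, Nat.min_eq_left hqq] at this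
  rcases hpre with ⟨r, hr⟩
  rw [prefixAssign, ← hr]
  exact assign_append h

lemma prefixAssign_full {t : Trail} {q : ℕ} {x : Var} {c : Bool}
    (h : prefixAssign t q x = some c) : Trail.assign t x = some c := by
  rw [← List.take_append_drop q t]
  exact assign_append h

lemma assign_eq_prefix_len {t : Trail} : Trail.assign t = prefixAssign t t.length := by
  rw [prefixAssign, List.take_length]

lemma exists_pos_of_prefixAssign {t : Trail} {q : ℕ} {x : Var} {c : Bool}
    (h : prefixAssign t q x = some c) :
    ∃ j, ∃ hj : j < t.length, j < q ∧ (t[j]'hj).1 = x ∧ (t[j]'hj).2.1 = c := by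
  simp only [prefixAssign, Trail.assign] at h
  rcases Option.map_eq_some_iff.mp h with ⟨e, he, hec⟩
  have hmem : e ∈ t.take q := List.mem_of_find?_eq_some he
  have hex : e.1 = x := by simpa using List.find?_some he
  rcases List.mem_iff_getElem.mp hmem with ⟨j, hj, hje⟩
  have hjq : j < q := lt_of_lt_of_le hj (by simp [List.length_take])
  have hjt : j < t.length := lt_of_lt_of_le hj (by simp [List.length_take])
  have hte : t[j]'hjt = e := by rw [← hje]; exact List.getElem_take.symm
  exact ⟨j, hjt, hjq, by rw [hte, hex], by rw [hte, hec]⟩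

lemma prefixAssign_none {t : Trail} (hnd : (Trail.varList t).Nodup) {j q : ℕ}
    (hj : j < t.length) (hqj : q ≤ j) : prefixAssign t q (t[j]'hj).1 = none := by
  simp only [prefixAssign, Trail.assign, Option.map_eq_none_iff]
  rw [List.find?_eq_none]
  intro e he hbeq
  rcases List.mem_iff_getElem.mp he with ⟨i, hi, hie⟩
  have hiq : i < q := lt_of_lt_of_le hi (by simp [List.length_take])
  have hit : i < t.length := lt_of_lt_of_le hi (by simp [List.length_take])
  have hte : t[i]'hit = e := by rw [← hie]; exact List.getElem_take.symm
  exact var_ne_of_ne hnd hit hj (by omega) (by rw [hte]; exact eq_of_beq hbeq)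

end Aux

section Chase

def chase (acc : List (Var × Clause)) (G : Clause) : Clause × List Clause :=
  match acc with
  | [] => (G, [])
  | (v, R) :: rest =>
    if v ∈ Clause.vars G then
      let p := chase rest (resolve v R G)
      (p.1, resolve v R G :: p.2)
    else chase rest G

lemma chase_len (acc : List (Var × Clause)) (G : Clause) :
    (chase acc G).2.length ≤ acc.length := by
  induction acc generalizing G with
  | nil => simp [chase]
  | cons vr rest ih =>
    obtain ⟨v, R⟩ := vr
    by_cases h : v ∈ Clause.vars G <;> simp only [chase, h, if_pos, if_neg, not_false_iff]
    · simpa using Nat.succ_le_succ (ih _)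
    · exact le_trans (ih _) (by simp)

lemma chase_lit_mem {acc : List (Var × Clause)} {G : Clause} {l : Lit}
    (hl : l ∈ G) (hne : ∀ vr ∈ acc, l.1 ≠ vr.1) : l ∈ (chase acc G).1 := by
  induction acc generalizing G with
  | nil => simpa [chase]
  | cons vr rest ih =>
    obtain ⟨v, R⟩ := vr
    by_cases h : v ∈ Clause.vars G <;> simp only [chase, h, if_pos, if_neg, not_false_iff]
    · exact ih (mem_resolve.mpr ⟨Or.inr hl, hne (v,R) (List.mem_cons_self)⟩)
        (fun vr hvr => hne vr (by simp [hvr]))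
    · exact ih hl (fun vr hvr => hne vr (by simp [hvr]))

lemma chase_var_not_mem {acc : List (Var × Clause)} {G : Clause} {u : Var}
    (hu : u ∉ Clause.vars G)
    (hacc : ∀ vr ∈ acc, u ≠ vr.1 ∧ ∀ l ∈ vr.2, l.1 ≠ vr.1 → l.1 ≠ u) :
    u ∉ Clause.vars (chase acc G).1 := by
  induction acc generalizing G with
  | nil => simpa [chase]
  | cons vr rest ih =>
    obtain ⟨v, R⟩ := vr
    by_cases h : v ∈ Clause.vars G <;> simp only [chase, h, if_pos, if_neg, not_false_iff]
    · refine ih ?_ (fun vr hvr => hacc vr (by simp [hvr]))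
      intro hmem
      rcases Finset.mem_image.mp hmem with ⟨l, hlG, hlu⟩
      rcases mem_resolve.mp hlG with ⟨hor, hlv⟩
      rcases hor with hR | hG2
      · rcases hacc (v, R) (by simp) with ⟨hune, hRl⟩
        exact hRl l hR hlv hlu
      · exact hu (Finset.mem_image.mpr ⟨l, hG2, hlu⟩)
    · exact ih hu (fun vr hvr => hacc vr (by simp [hvr]))

lemma chase_vars_acc {π : Var → ℕ} {acc : List (Var × Clause)} {G : Clause}
    (hacc2 : ∀ vr ∈ acc, ∀ l ∈ vr.2, l.1 ≠ vr.1 → π l.1 < π vr.1)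
    (hpair : List.Pairwise (fun a b : Var × Clause => π b.1 < π a.1) acc) :
    ∀ vr ∈ acc, vr.1 ∉ Clause.vars (chase acc G).1 := by
  induction acc generalizing G with
  | nil => simp
  | cons hd rest ih =>
    obtain ⟨v, R⟩ := hd
    have hrest2 : ∀ vr ∈ rest, ∀ l ∈ vr.2, l.1 ≠ vr.1 → π l.1 < π vr.1 :=
      fun vr hvr => hacc2 vr (by simp [hvr])
    have hpr : List.Pairwise (fun a b : Var × Clause => π b.1 < π a.1) rest :=
      hpair.of_cons
    have hhead : ∀ b ∈ rest, π b.1 < π v := by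
      have := List.pairwise_cons.mp hpair
      exact fun b hb => this.1 b hb
    intro vr hvr
    have hcond : ∀ wr ∈ rest, v ≠ wr.1 ∧ ∀ l ∈ wr.2, l.1 ≠ wr.1 → l.1 ≠ v := by
      intro wr hwr
      constructor
      · intro h; exact absurd (h ▸ hhead wr hwr) (lt_irrefl _)
      · intro l hl hlw hlv
        have := hrest2 wr hwr l hl hlw
        rw [hlv] at this
        exact absurd (lt_trans this (hhead wr hwr)) (lt_irrefl _)
    rcases List.mem_cons.mp hvr with rfl | hvrrest
    · -- vr = (v, R)
      by_cases h : v ∈ Clause.vars G <;>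
        simp only [chase, h, if_pos, if_neg, not_false_iff]
      · exact chase_var_not_mem (by
          intro hmem
          rcases Finset.mem_image.mp hmem with ⟨l, hlG, hlu⟩
          exact (mem_resolve.mp hlG).2 hlu) hcond
      · exact chase_var_not_mem h hcond
    · by_cases h : v ∈ Clause.vars G <;>
        simp only [chase, h, if_pos, if_neg, not_false_iff]
      · exact ih hrest2 hpr vr hvrrest
      · exact ih hrest2 hpr vr hvrrest

end Chase

section Deriv

lemma isDeriv_nil {τ : Set Clause} {ok : Clause → Clause → Var → Prop} :
    IsDeriv τ ok [] := fun i => absurd i.2 (by simp)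

lemma isDeriv_snoc {τ : Set Clause} {ok : Clause → Clause → Var → Prop}
    {L : List Clause} {C : Clause} (hL : IsDeriv τ ok L)
    (hC : C ∈ τ ∨ ResStep ok L C) : IsDeriv τ ok (L ++ [C]) := by
  intro i
  have hlen : (L ++ [C]).length = L.length + 1 := by simp
  by_cases hi : i.1 < L.length
  · have hget : (L ++ [C]).get i = L.get ⟨i.1, hi⟩ := by
      simp [List.get_eq_getElem, List.getElem_append_left hi]
    have htake : (L ++ [C]).take i.1 = L.take i.1 :=
      List.take_append_of_le_length (le_of_lt hi)
    rw [hget, htake]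
    exact hL ⟨i.1, hi⟩
  · have hieq : i.1 = L.length := by have := i.2; simp at this; omega
    have hget : (L ++ [C]).get i = C := by
      simp [List.get_eq_getElem, List.getElem_append_right (le_of_eq hieq.symm), hieq]
    have htake : (L ++ [C]).take i.1 = L := by rw [hieq, List.take_left]
    rw [hget, htake]
    exact hC

def AccProp (π : Var → ℕ) (t : Trail) (U : Clause) (vr : Var × Clause) : Prop :=
  ∃ p b, ∃ hp : p < t.length, t[p]'hp = (vr.1, b, false) ∧ (vr.1, b) ∈ vr.2 ∧
    ∀ l ∈ vr.2, l.1 ≠ vr.1 → π l.1 < π vr.1 ∧ l ∈ U ∧ litFalse (prefixAssign t p) l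

lemma chase_spec (π : Var → ℕ) {t : Trail} (hnd : (Trail.varList t).Nodup)
    {U K : Clause} {q : ℕ} {𝒞 : Set Clause} :
    ∀ (acc : List (Var × Clause)) (G : Clause) (L : List Clause),
    (∀ vr ∈ acc, AccProp π t U vr) →
    (∀ l ∈ G, l ∈ U ∧ (l ∈ K ∨ litFalse (prefixAssign t q) l)) →
    (∀ l ∈ K, ∀ vr ∈ acc, l.1 ≠ vr.1) →
    IsDeriv 𝒞 (okHalf π) L → G ∈ L → (∀ vr ∈ acc, vr.2 ∈ L) →
    (∀ l ∈ (chase acc G).1, l ∈ U ∧ (l ∈ K ∨ litFalse (prefixAssign t q) l)) ∧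
    IsDeriv 𝒞 (okHalf π) (L ++ (chase acc G).2) ∧
    (chase acc G).1 ∈ L ++ (chase acc G).2 := by
  intro acc
  induction acc with
  | nil =>
    intro G L _ hG _ hL hGL _
    refine ⟨hG, ?_, ?_⟩
    · rw [show (chase [] G).2 = [] from rfl, List.append_nil]; exact hL
    · rw [show (chase [] G).2 = [] from rfl, List.append_nil]; exact hGL
  | cons hd rest ih =>
    obtain ⟨v, R⟩ := hd
    intro G L hacc hG hK hL hGL hRL
    by_cases h : v ∈ Clause.vars G
    · -- resolution step
      rcases hacc (v, R) (List.mem_cons_self) with ⟨p, b, hp, htp, hvbR, hRlits⟩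
      -- the literal on v in G
      rcases Finset.mem_image.mp h with ⟨l0, hl0G, hl0v⟩
      set c := l0.2 with hc
      have hvcG : (v, c) ∈ G := by
        have : l0 = (v, c) := by rw [← hl0v, hc]
        rwa [← this]
      have hvcK : (v, c) ∉ K := by
        intro hmem
        exact hK (v, c) hmem (v, R) (List.mem_cons_self) rfl
      have hfalse : litFalse (prefixAssign t q) (v, c) := by
        rcases (hG (v, c) hvcG).2 with h1 | h1
        · exact absurd h1 hvcK
        · exact h1
      rcases exists_pos_of_prefixAssign hfalse with ⟨j, hj, hjq, hjv, hjval⟩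
      have hjp : j = p := by
        by_contra hne
        exact var_ne_of_ne hnd hj hp hne (by rw [hjv, htp])
      subst hjp
      have hpq : j < q := hjq
      have hcb : c = !b := by
        have h1 : (t[j]'hj).2.1 = b := by rw [htp]
        have h2 : b = !c := h1.symm.trans hjval
        simp [h2]
      set G' := resolve v R G with hG'
      have hstep : ResStep (okHalf π) L G' := by
        refine ⟨R, hRL (v, R) (List.mem_cons_self), G, hGL, v, b, hvbR, ?_, rfl, ?_⟩
        · rwa [← hcb]
        · left
          intro y hy hyv
          rcases Finset.mem_image.mp hy with ⟨m, hm, hmy⟩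
          exact hmy ▸ (hRlits m hm (by rw [hmy]; exact hyv)).1
      have hG'lits : ∀ l ∈ G', l ∈ U ∧ (l ∈ K ∨ litFalse (prefixAssign t q) l) := by
        intro l hl
        rcases mem_resolve.mp hl with ⟨hor, hlv⟩
        rcases hor with hR | hGm
        · rcases hRlits l hR hlv with ⟨_, hU, hF⟩
          exact ⟨hU, Or.inr (prefixAssign_mono (le_of_lt hpq) hF)⟩
        · exact hG l hGm
      have hL' : IsDeriv 𝒞 (okHalf π) (L ++ [G']) := isDeriv_snoc hL (Or.inr hstep)
      have := ih G' (L ++ [G'])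
        (fun vr hvr => hacc vr (List.mem_cons_of_mem _ hvr))
        hG'lits
        (fun l hl vr hvr => hK l hl vr (List.mem_cons_of_mem _ hvr))
        hL' (by simp)
        (fun vr hvr => List.mem_append_left _ (hRL vr (List.mem_cons_of_mem _ hvr)))
      rcases this with ⟨c1, c2, c3⟩
      have hch : chase ((v, R) :: rest) G = ((chase rest G').1, G' :: (chase rest G').2) := by
        simp only [chase, if_pos h, hG']
      rw [hch]
      refine ⟨c1, ?_, ?_⟩
      · simpa [List.append_assoc] using c2
      · simpa [List.append_assoc] using c3
    · have hch : chase ((v, R) :: rest) G = chase rest G := by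
        simp only [chase, if_neg h]
      rw [hch]
      exact ih G L (fun vr hvr => hacc vr (List.mem_cons_of_mem _ hvr)) hG
        (fun l hl vr hvr => hK l hl vr (List.mem_cons_of_mem _ hvr)) hL hGL
        (fun vr hvr => hRL vr (List.mem_cons_of_mem _ hvr))

end Deriv

section Decomp

abbrev Rdat := ℕ × Var × Bool × Clause

def bigU (D₀ : Clause) (ρ : List Rdat) : Clause := ρ.foldr (fun e A => e.2.2.2 ∪ A) D₀

lemma mem_bigU {D₀ : Clause} {ρ : List Rdat} {l : Lit} :
    l ∈ bigU D₀ ρ ↔ l ∈ D₀ ∨ ∃ e ∈ ρ, l ∈ e.2.2.2 := by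
  induction ρ with
  | nil => simp [bigU]
  | cons e rest ih =>
    simp only [bigU, List.foldr_cons, Finset.mem_union] at *
    rw [ih]
    constructor
    · rintro (h | h | ⟨e', he', hl⟩)
      exacts [Or.inr ⟨e, List.mem_cons_self, h⟩, Or.inl h,
        Or.inr ⟨e', List.mem_cons_of_mem _ he', hl⟩]
    · rintro (h | ⟨e', he', hl⟩)
      · exact Or.inr (Or.inl h)
      · rcases List.mem_cons.mp he' with rfl | h2
        exacts [Or.inl hl, Or.inr (Or.inr ⟨e', h2, hl⟩)]

def Vlist (ρ : List Rdat) : List Var := ρ.map (fun e => e.2.1)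

def RhoProp (𝒞 : Set Clause) (t : Trail) (e : Rdat) : Prop :=
  ∃ h : e.1 < t.length, t[e.1]'h = (e.2.1, e.2.2.1, false) ∧ e.2.2.2 ∈ 𝒞 ∧
    restrictedIsUnit (prefixAssign t e.1) e.2.2.2 (e.2.1, e.2.2.1)

lemma decomp_lit_false {𝒞 : Set Clause} {t : Trail} {D₀ : Clause} {ρ : List Rdat}
    (hD₀ : Clause.falsified (Trail.assign t) D₀)
    (hρ : ∀ e ∈ ρ, RhoProp 𝒞 t e) :
    ∀ l ∈ (bigU D₀ ρ).filter (fun l => l.1 ∉ Vlist ρ), litFalse (Trail.assign t) l := by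
  intro l hl
  rcases Finset.mem_filter.mp hl with ⟨hlU, hlV⟩
  rcases mem_bigU.mp hlU with h0 | ⟨e, he, hle⟩
  · exact hD₀ l h0
  · rcases hρ e he with ⟨hp, htp, hC, hunit⟩
    by_cases hle2 : l = (e.2.1, e.2.2.1)
    · exfalso
      apply hlV
      simp only [Vlist, List.mem_map]
      exact ⟨e, he, by rw [hle2]⟩
    · exact prefixAssign_full (hunit.2.2 l hle hle2)

lemma csetDown_decomp {𝒞 : Set Clause} {t : Trail} (hnd : (Trail.varList t).Nodup) :
    ∀ m, m ≤ t.length → ∀ D ∈ CsetDown 𝒞 t m,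
    ∃ (D₀ : Clause) (ρ : List Rdat), D₀ ∈ 𝒞 ∧ Clause.falsified (Trail.assign t) D₀ ∧
      (∀ e ∈ ρ, RhoProp 𝒞 t e ∧ t.length - m ≤ e.1) ∧
      List.Pairwise (fun a b : Rdat => a.1 < b.1) ρ ∧
      D = (bigU D₀ ρ).filter (fun l => l.1 ∉ Vlist ρ) ∧
      (∀ j (hj : j < t.length), t.length - m ≤ j → (t[j]'hj).2.2 = false →
        ∀ b, ((t[j]'hj).1, b) ∉ D) := by
  intro m
  induction m with
  | zero =>
    intro _ D hD
    rcases hD with ⟨hD𝒞, hDf⟩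
    refine ⟨D, [], hD𝒞, hDf, by simp, by simp, ?_, ?_⟩
    · ext l; simp [bigU, Vlist]
    · intro j hj hij _ _ _; omega
  | succ m ih =>
    intro hm D hD
    have hmN : m ≤ t.length := by omega
    have hlt : t.length - m - 1 < t.length := by omega
    simp only [CsetDown] at hD
    rw [stepSet] at hD
    simp only [List.getElem?_eq_getElem hlt] at hD
    set e := t[t.length - m - 1]'hlt with he
    have hemem : e ∈ t := List.getElem_mem _
    by_cases hflag : e.2.2
    · rw [if_pos hflag] at hD
      rcases ih hmN D hD with ⟨D₀, ρ, h1, h2, h3, h4, h5, h6⟩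
      refine ⟨D₀, ρ, h1, h2, fun e' he' => ⟨(h3 e' he').1, by have := (h3 e' he').2; omega⟩,
        h4, h5, ?_⟩
      intro j hj hij hfj b
      by_cases hjm : t.length - m ≤ j
      · exact h6 j hj hjm hfj b
      · exfalso
        have hje : j = t.length - m - 1 := by omega
        have hte : (t[j]'hj) = e := by subst hje; rw [he]
        rw [hte] at hfj
        rw [hfj] at hflag
        exact absurd hflag (by simp)
    · rw [if_neg hflag] at hD
      have hflag' : e.2.2 = false := by simpa using hflag
      rcases hD with ⟨hDp, hnot⟩ | ⟨D', hD', hyD', C, hC, hunit, rfl⟩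
      · -- kept clause
        rcases ih hmN D hDp with ⟨D₀, ρ, h1, h2, h3, h4, h5, h6⟩
        refine ⟨D₀, ρ, h1, h2, fun e' he' => ⟨(h3 e' he').1, by have := (h3 e' he').2; omega⟩,
          h4, h5, ?_⟩
        intro j hj hij hfj b hbD
        by_cases hjm : t.length - m ≤ j
        · exact h6 j hj hjm hfj b hbD
        · have hje : j = t.length - m - 1 := by omega
          have hte : (t[j]'hj) = e := by subst hje; rw [he]
          have hfalse : litFalse (Trail.assign t) ((t[j]'hj).1, b) := by
            rw [h5] at hbD
            exact decomp_lit_false h2 (fun e' he' => (h3 e' he').1) _ hbD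
          have hsome : Trail.assign t (t[j]'hj).1 = some (t[j]'hj).2.1 :=
            assign_of_mem hnd (List.getElem_mem _)
          have hb : b = !e.2.1 := by
            have h9 : some ((t[j]'hj).2.1) = some (!b) := hsome.symm.trans hfalse
            rw [hte] at h9
            simp only [Option.some.injEq] at h9
            simp [h9]
          rw [hte, hb] at hbD
          exact hnot hbD
      · -- resolvent
        rcases ih hmN D' hD' with ⟨D₀, ρ, h1, h2, h3, h4, h5, h6⟩
        set p := t.length - m - 1 with hp
        have hCpos : ∀ l ∈ C, l ≠ (e.1, e.2.1) →
            ∃ j, ∃ hj : j < t.length, j < p ∧ (t[j]'hj).1 = l.1 := by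
          intro l hl hlne
          rcases exists_pos_of_prefixAssign (hunit.2.2 l hl hlne) with ⟨j, hj, hjp, hjl, _⟩
          exact ⟨j, hj, hjp, hjl⟩
        have hCnotV : ∀ l ∈ C, l.1 ∉ Vlist ρ := by
          intro l hl hmem
          simp only [Vlist, List.mem_map] at hmem
          rcases hmem with ⟨e', he', hve⟩
          rcases (h3 e' he') with ⟨⟨hpe', hte', _, _⟩, hge'⟩
          by_cases hlne : l = (e.1, e.2.1)
          · have hne : (t[p]'hlt).1 ≠ (t[e'.1]'hpe').1 :=
              var_ne_of_ne hnd hlt hpe' (by omega)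
            apply hne
            rw [← he, hte']
            rw [hlne] at hve
            exact hve.symm ▸ rfl
          · rcases hCpos l hl hlne with ⟨j, hj, hjp, hjl⟩
            have hne : (t[j]'hj).1 ≠ (t[e'.1]'hpe').1 :=
              var_ne_of_ne hnd hj hpe' (by omega)
            apply hne
            rw [hjl, hte', ← hve]
        refine ⟨D₀, (p, e.1, e.2.1, C) :: ρ, h1, h2, ?_, ?_, ?_, ?_⟩
        · intro e' he'
          rcases List.mem_cons.mp he' with rfl | he'
          · refine ⟨⟨hlt, ?_, hC, hunit⟩, by omega⟩
            rw [← he]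
            rw [he]
            exact Prod.ext rfl (Prod.ext rfl hflag')
          · exact ⟨(h3 e' he').1, by have := (h3 e' he').2; omega⟩
        · refine List.pairwise_cons.mpr ⟨?_, h4⟩
          intro e' he'
          have := (h3 e' he').2
          simp only []
          omega
        · -- the clause identity
          have hVcons : Vlist ((p, e.1, e.2.1, C) :: ρ) = e.1 :: Vlist ρ := rfl
          ext l
          rw [mem_resolve, h5]
          constructor
          · rintro ⟨hor, hlv⟩
            refine Finset.mem_filter.mpr ⟨?_, ?_⟩
            · refine mem_bigU.mpr ?_
              rcases hor with hCl | hDl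
              · exact Or.inr ⟨(p, e.1, e.2.1, C), List.mem_cons_self, hCl⟩
              · rcases mem_bigU.mp (Finset.mem_filter.mp hDl).1 with h0 | ⟨e', he', hl'⟩
                · exact Or.inl h0
                · exact Or.inr ⟨e', List.mem_cons_of_mem _ he', hl'⟩
            · rw [hVcons]
              intro hmem
              rcases List.mem_cons.mp hmem with h0 | h0
              · exact hlv h0
              · rcases hor with hCl | hDl
                · exact hCnotV l hCl h0
                · exact (Finset.mem_filter.mp hDl).2 h0
          · intro hmemF
            rcases Finset.mem_filter.mp hmemF with ⟨hU, hnV'⟩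
            rw [hVcons] at hnV'
            have hne : l.1 ≠ e.1 := fun h => hnV' (by rw [h]; exact List.mem_cons_self)
            have hnV : l.1 ∉ Vlist ρ := fun h => hnV' (List.mem_cons_of_mem _ h)
            refine ⟨?_, hne⟩
            rcases mem_bigU.mp hU with h0 | ⟨e', he', hl'⟩
            · exact Or.inr (h5 ▸ Finset.mem_filter.mpr ⟨mem_bigU.mpr (Or.inl h0), hnV⟩)
            · rcases List.mem_cons.mp he' with rfl | he''
              · exact Or.inl hl'
              · exact Or.inr (h5 ▸ Finset.mem_filter.mpr
                  ⟨mem_bigU.mpr (Or.inr ⟨e', he'', hl'⟩), hnV⟩)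
        · -- no propagated vars from the processed region
          intro j hj hij hfj b hbD
          rcases mem_resolve.mp hbD with ⟨hor, hlv⟩
          by_cases hjm : t.length - m ≤ j
          · rcases hor with hCl | hDl
            · by_cases hlne : ((t[j]'hj).1, b) = (e.1, e.2.1)
              · exact hlv (by rw [hlne])
              · rcases hCpos _ hCl hlne with ⟨j', hj', hjp', hjl'⟩
                exact var_ne_of_ne hnd hj' hj (by omega) hjl'
            · exact h6 j hj hjm hfj b hDl
          · have hje : j = t.length - m - 1 := by omega
            apply hlv
            have hte : (t[j]'hj) = e := by subst hje; rw [he]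
            rw [hte]
      
end Decomp

section Count

lemma not_mem_varList_take {t : Trail} (hnd : (Trail.varList t).Nodup) {p j : ℕ}
    (hp : p < t.length) (hjp : j ≤ p) :
    (t[p]'hp).1 ∉ Trail.varList (t.take j) := by
  intro hmem
  simp only [Trail.varList, List.mem_map] at hmem
  rcases hmem with ⟨e, he, hve⟩
  rcases List.mem_iff_getElem.mp he with ⟨i, hi, hie⟩
  have hiq : i < j := lt_of_lt_of_le hi (by simp [List.length_take])
  have hit : i < t.length := lt_of_lt_of_le hi (by simp [List.length_take])
  have hte : t[i]'hit = e := by rw [← hie]; exact List.getElem_take.symm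
  exact var_ne_of_ne hnd hit hp (by omega) (by rw [hte, hve])

lemma rho_length_le {t : Trail} {ρ : List Rdat}
    (hρ : ∀ e ∈ ρ, ∃ h : e.1 < t.length, (t[e.1]'h).2.2 = false)
    (hpair : List.Pairwise (fun a b : Rdat => a.1 < b.1) ρ) :
    ρ.length ≤ unitCount t := by
  classical
  set P : TEntry → Bool := fun e => !e.2.2 with hP
  set q : Fin t.length → Bool := fun i => P (t.get i) with hq
  set js : List ℕ := ((List.finRange t.length).filter q).map Fin.val with hjs
  have hjsnd : js.Nodup :=
    List.Nodup.map Fin.val_injective ((List.nodup_finRange _).filter _)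
  have hsub : ρ.map (fun e => e.1) ⊆ js := by
    intro i hi
    rcases List.mem_map.mp hi with ⟨e, he, hei⟩
    rcases hρ e he with ⟨h, hflag⟩
    subst hei
    refine List.mem_map.mpr ⟨⟨e.1, h⟩, List.mem_filter.mpr ⟨List.mem_finRange _, ?_⟩, rfl⟩
    simp only [hq, hP, List.get_eq_getElem]
    rw [hflag]
    rfl
  have hisnd : (ρ.map (fun e => e.1)).Nodup := by
    refine List.Pairwise.imp (fun h => Nat.ne_of_lt h) ?_
    exact (List.pairwise_map).mpr hpair
  have hlen1 : ρ.length ≤ js.length := by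
    have := (hisnd.subperm hsub).length_le
    simpa using this
  have hlen2 : js.length = unitCount t := by
    have hfr : t.filter P = ((List.finRange t.length).filter q).map t.get := by
      conv_lhs => rw [show t = (List.finRange t.length).map t.get from
        (List.map_get_finRange t).symm]
      rw [List.filter_map]
      rfl
    have : js.length = (((List.finRange t.length).filter q).map t.get).length := by
      simp [hjs]
    rw [this, ← hfr, unitCount]
  omega

end Count

section Loop

lemma loop_spec {n : ℕ} {π : Var → ℕ} (hπ : Function.Injective π)
    {𝒞 : Set Clause} {t : Trail} (hnd : (Trail.varList t).Nodup)
    (hn : ∀ e ∈ t, e.1 < n) (hro : RespectsOrder n π t)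
    {U : Clause} {VV : List Var}
    (hprop : ∀ l ∈ U, ∀ j (hj : j < t.length),
      (t[j]'hj).1 = l.1 → (t[j]'hj).2.2 = false → l.1 ∈ VV) :
    ∀ (s : List Rdat) (acc : List (Var × Clause)) (L : List Clause),
    (∀ e ∈ s, RhoProp 𝒞 t e ∧ ∀ l ∈ e.2.2.2, l ∈ U) →
    List.Pairwise (fun a b : Rdat => π b.2.1 < π a.2.1) s →
    (∀ vr ∈ acc, ∀ e ∈ s, π e.2.1 < π vr.1) →
    (∀ vr ∈ acc, AccProp π t U vr) →
    List.Pairwise (fun a b : Var × Clause => π b.1 < π a.1) acc →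
    IsDeriv 𝒞 (okHalf π) L →
    (∀ vr ∈ acc, vr.2 ∈ L) →
    (∀ x ∈ VV, x ∈ acc.map Prod.fst ∨ x ∈ s.map (fun e => e.2.1)) →
    ∃ (acc' : List (Var × Clause)) (L' : List Clause),
      (∀ vr ∈ acc', AccProp π t U vr) ∧
      List.Pairwise (fun a b : Var × Clause => π b.1 < π a.1) acc' ∧
      IsDeriv 𝒞 (okHalf π) L' ∧ (∀ vr ∈ acc', vr.2 ∈ L') ∧
      (∀ x ∈ VV, x ∈ acc'.map Prod.fst) ∧
      acc'.length = acc.length + s.length ∧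
      L'.length ≤ L.length + s.length * (1 + acc.length + s.length) := by
  intro s
  induction s with
  | nil =>
    intro acc L _ _ _ hacc hpair hL hRL hcov
    refine ⟨acc, L, hacc, hpair, hL, hRL, ?_, by simp, by simp⟩
    intro x hx
    rcases hcov x hx with h | h
    · exact h
    · simp at h
  | cons e s' ih =>
    intro acc L hs hsort hcross hacc hpair hL hRL hcov
    obtain ⟨p, v, b, C⟩ := e
    rcases hs _ (List.mem_cons_self) with ⟨⟨hp, htp, hC𝒞, hunit⟩, hCU⟩
    -- htp : t[p] = (v, b, false) (up to projections)
    set L1 : List Clause := L ++ [C] with hL1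
    have hL1d : IsDeriv 𝒞 (okHalf π) L1 := isDeriv_snoc hL (Or.inl hC𝒞)
    have hvacc : ∀ vr ∈ acc, v ≠ vr.1 := by
      intro vr hvr hveq
      have := hcross vr hvr _ (List.mem_cons_self)
      rw [hveq] at this
      exact lt_irrefl _ this
    have hK : ∀ l ∈ ({(v, b)} : Clause), ∀ vr ∈ acc, l.1 ≠ vr.1 := by
      intro l hl vr hvr
      rw [Finset.mem_singleton] at hl
      rw [hl]
      exact hvacc vr hvr
    have hG : ∀ l ∈ C, l ∈ U ∧ (l ∈ ({(v, b)} : Clause) ∨ litFalse (prefixAssign t p) l) := by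
      intro l hl
      refine ⟨hCU l hl, ?_⟩
      by_cases hle : l = (v, b)
      · exact Or.inl (Finset.mem_singleton.mpr hle)
      · exact Or.inr (hunit.2.2 l hl hle)
    have hspec := chase_spec π hnd acc C L1 hacc hG hK hL1d
      (List.mem_append_right _ (List.mem_singleton.mpr rfl))
      (fun vr hvr => List.mem_append_left _ (hRL vr hvr))
    rcases hspec with ⟨c1, c2, c3⟩
    set R : Clause := (chase acc C).1 with hR
    set st : List Clause := (chase acc C).2 with hst
    set L2 : List Clause := L1 ++ st with hL2
    have hvbC : (v, b) ∈ C := hunit.1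
    have hvbR : (v, b) ∈ R := chase_lit_mem hvbC (fun vr hvr => hvacc vr hvr)
    have hacc2 : ∀ vr ∈ acc, ∀ l ∈ vr.2, l.1 ≠ vr.1 → π l.1 < π vr.1 := by
      intro vr hvr l hl hlne
      rcases hacc vr hvr with ⟨p', b', hp', htp', hvb', hlits'⟩
      exact (hlits' l hl hlne).1
    have hvarsacc := chase_vars_acc (π := π) (G := C) hacc2 hpair
    have hnewAcc : AccProp π t U (v, R) := by
      refine ⟨p, b, hp, htp, hvbR, ?_⟩
      intro l hl hlne
      rcases c1 l hl with ⟨hU, hor⟩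
      have hfall : litFalse (prefixAssign t p) l := by
        rcases hor with hK' | hf
        · exact absurd (Finset.mem_singleton.mp hK') (by
            intro h; exact hlne (by rw [h]))
        · exact hf
      refine ⟨?_, hU, hfall⟩
      rcases lt_trichotomy (π l.1) (π v) with hlt | heq | hgt
      · exact hlt
      · exact absurd (hπ heq) hlne
      · exfalso
        rcases exists_pos_of_prefixAssign hfall with ⟨j, hj, hjp, hjl, _⟩
        have hvn : v < n := by
          have := hn (t[p]'hp) (List.getElem_mem _)
          rw [htp] at this
          exact this
        by_cases hflag : (t[j]'hj).2.2 = true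
        · -- decision: contradicts order
          have hvnot : v ∉ Trail.varList (t.take j) := by
            have := not_mem_varList_take hnd hp (le_of_lt hjp)
            rw [htp] at this
            exact this
          have hle : π l.1 ≤ π v := by
            have h10 := hro j hj hflag v hvn hvnot
            rw [hjl] at h10
            exact h10
          omega
        · -- propagated: must be in VV
          have hflag' : (t[j]'hj).2.2 = false := by simpa using hflag
          have hlVV : l.1 ∈ VV := hprop l hU j hj hjl hflag'
          rcases hcov l.1 hlVV with hA | hS
          · rcases List.mem_map.mp hA with ⟨vr, hvr, hvrl⟩
            apply hvarsacc vr hvr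
            rw [hvrl]
            exact Finset.mem_image.mpr ⟨l, hl, rfl⟩
          · rcases List.mem_map.mp hS with ⟨e', he', hvel⟩
            rcases List.mem_cons.mp he' with rfl | he''
            · exact hlne (by rw [← hvel])
            · have := List.pairwise_cons.mp hsort
              have hlt2 := this.1 e' he''
              rw [hvel] at hlt2
              have hlt3 : π l.1 < π v := hlt2
              omega
    have hcross' : ∀ vr ∈ acc ++ [(v, R)], ∀ e' ∈ s', π e'.2.1 < π vr.1 := by
      intro vr hvr e' he'
      rcases List.mem_append.mp hvr with hvr | hvr
      · exact hcross vr hvr e' (List.mem_cons_of_mem _ he')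
      · have hvreq : vr = (v, R) := by simpa using hvr
        subst hvreq
        have hlt4 := (List.pairwise_cons.mp hsort).1 e' he'
        exact hlt4
    have hacc' : ∀ vr ∈ acc ++ [(v, R)], AccProp π t U vr := by
      intro vr hvr
      rcases List.mem_append.mp hvr with hvr | hvr
      · exact hacc vr hvr
      · have hvreq : vr = (v, R) := by simpa using hvr
        subst hvreq
        exact hnewAcc
    have hpair' : List.Pairwise (fun a b : Var × Clause => π b.1 < π a.1) (acc ++ [(v, R)]) := by
      rw [List.pairwise_append]
      refine ⟨hpair, List.pairwise_singleton _ _, ?_⟩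
      intro a ha b' hb'
      have hb'eq : b' = (v, R) := by simpa using hb'
      subst hb'eq
      exact hcross a ha _ (List.mem_cons_self)
    have hRL' : ∀ vr ∈ acc ++ [(v, R)], vr.2 ∈ L2 := by
      intro vr hvr
      rcases List.mem_append.mp hvr with hvr | hvr
      · exact List.mem_append_left _ (List.mem_append_left _ (hRL vr hvr))
      · have hvreq : vr = (v, R) := by simpa using hvr
        subst hvreq
        exact c3
    have hcov' : ∀ x ∈ VV, x ∈ (acc ++ [(v, R)]).map Prod.fst ∨ x ∈ s'.map (fun e => e.2.1) := by
      intro x hx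
      rcases hcov x hx with hA | hS
      · left
        rcases List.mem_map.mp hA with ⟨vr, hvr, hvrx⟩
        exact List.mem_map.mpr ⟨vr, List.mem_append_left _ hvr, hvrx⟩
      · rcases List.mem_map.mp hS with ⟨e', he', hvex⟩
        rcases List.mem_cons.mp he' with rfl | he''
        · left
          exact List.mem_map.mpr ⟨(v, R), List.mem_append_right _ (by simp), hvex⟩
        · right
          exact List.mem_map.mpr ⟨e', he'', hvex⟩
    obtain ⟨acc', L', a1, a2, a3, a4, a5, a6, a7⟩ :=
      ih (acc ++ [(v, R)]) L2 (fun e' he' => hs e' (List.mem_cons_of_mem _ he'))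
        hsort.of_cons hcross' hacc' hpair' c2 hRL' hcov'
    refine ⟨acc', L', a1, a2, a3, a4, a5, ?_, ?_⟩
    · simp only [List.length_append, List.length_cons, List.length_nil,
        List.length_singleton] at a6 ⊢
      omega
    · have hstlen : st.length ≤ acc.length := chase_len acc C
      have hL2len : L2.length = L.length + 1 + st.length := by
        simp only [hL2, hL1, List.length_append, List.length_cons, List.length_nil]
      have hacclen : (acc ++ [(v, R)]).length = acc.length + 1 := by simp
      rw [hacclen] at a7
      have hexp : (s'.length + 1) * (1 + acc.length + (s'.length + 1)) =
          s'.length * (1 + (acc.length + 1) + s'.length) + (acc.length + s'.length + 2) := by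
        ring
      simp only [List.length_cons]
      rw [hexp]
      linarith [a7, hstlen, hL2len]

end Loop

theorem stmt_11 :
    ∃ c : ℕ, ∀ (n : ℕ) (π : Var → ℕ), Function.Injective π →
      ∀ (𝒞 : Set Clause) (t : Trail), (Trail.varList t).Nodup →
        (∀ e ∈ t, e.1 < n) → RespectsOrder n π t →
        -- D is learnable with the DECISION-L scheme, i.e. D ∈ C₁((𝒞, t))
        ∀ D ∈ CsetDown 𝒞 t t.length,
          ∃ (L : List Clause) (D' : Clause),
            IsDeriv 𝒞 (okHalf π) L ∧ D' ∈ L ∧ D' ⊆ D ∧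
            L.length ≤ c * (unitCount t + 1) ^ 2 := by
  classical
  refine ⟨1, ?_⟩
  intro n π hπ 𝒞 t hnd hn hro D hD
  obtain ⟨D₀, ρ, h1, h2, h3, h4, h5, h6⟩ := csetDown_decomp hnd t.length le_rfl D hD
  set U : Clause := bigU D₀ ρ with hU
  set VV : List Var := Vlist ρ with hVV
  -- every literal of U on a propagated variable has its variable in VV
  have hprop : ∀ l ∈ U, ∀ j (hj : j < t.length),
      (t[j]'hj).1 = l.1 → (t[j]'hj).2.2 = false → l.1 ∈ VV := by
    intro l hlU j hj hjl hflag
    by_contra hnV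
    have hlD : l ∈ D := by
      rw [h5]
      exact Finset.mem_filter.mpr ⟨hlU, hnV⟩
    have := h6 j hj (by omega) hflag l.2
    rw [hjl] at this
    exact this (by simpa using hlD)
  -- sort ρ by decreasing π-value of the propagated variable
  set r : Rdat → Rdat → Prop := fun a b => π b.2.1 ≤ π a.2.1 with hr
  haveI : DecidableRel r := fun a b => by unfold r; infer_instance
  haveI : IsTotal Rdat r := ⟨fun a b => le_total _ _⟩
  haveI : IsTrans Rdat r := ⟨fun a b c hab hbc => le_trans hbc hab⟩
  set s : List Rdat := List.insertionSort r ρ with hs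
  have hperm : s.Perm ρ := List.perm_insertionSort r ρ
  have hsorted : List.Pairwise r s := List.pairwise_insertionSort r ρ
  have hvarsne : List.Pairwise (fun a b : Rdat => a.2.1 ≠ b.2.1) ρ := by
    refine h4.imp_of_mem ?_
    intro a b ha hb hab
    rcases (h3 a ha).1 with ⟨hpa, hta, _, _⟩
    rcases (h3 b hb).1 with ⟨hpb, htb, _, _⟩
    have hne := var_ne_of_ne hnd hpa hpb (by omega)
    rw [hta, htb] at hne
    exact hne
  have hvarsne_s : List.Pairwise (fun a b : Rdat => a.2.1 ≠ b.2.1) s :=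
    ((List.Perm.pairwise_iff (fun h => h.symm) hperm).mpr hvarsne)
  have hsortstrict : List.Pairwise (fun a b : Rdat => π b.2.1 < π a.2.1) s := by
    refine (hsorted.and hvarsne_s).imp ?_
    rintro a b ⟨hle, hne⟩
    exact lt_of_le_of_ne hle (fun h => hne (hπ h.symm))
  have hselem : ∀ e ∈ s, RhoProp 𝒞 t e ∧ ∀ l ∈ e.2.2.2, l ∈ U := by
    intro e he
    have heρ : e ∈ ρ := hperm.mem_iff.mp he
    exact ⟨(h3 e heρ).1, fun l hl => mem_bigU.mpr (Or.inr ⟨e, heρ, hl⟩)⟩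
  have hcov0 : ∀ x ∈ VV, x ∈ ([] : List (Var × Clause)).map Prod.fst ∨
      x ∈ s.map (fun e => e.2.1) := by
    intro x hx
    right
    rw [hVV, Vlist] at hx
    rcases List.mem_map.mp hx with ⟨e, he, hve⟩
    exact List.mem_map.mpr ⟨e, hperm.mem_iff.mpr he, hve⟩
  obtain ⟨accF, L1, a1, a2, a3, a4, a5, a6, a7⟩ :=
    loop_spec hπ hnd hn hro hprop s [] [] hselem hsortstrict
      (by simp) (by simp) (by simp) isDeriv_nil (by simp) hcov0
  -- final chase from D₀
  set L2 : List Clause := L1 ++ [D₀] with hL2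
  have hL2d : IsDeriv 𝒞 (okHalf π) L2 := isDeriv_snoc a3 (Or.inl h1)
  have hG0 : ∀ l ∈ D₀, l ∈ U ∧ (l ∈ (∅ : Clause) ∨ litFalse (prefixAssign t t.length) l) := by
    intro l hl
    refine ⟨mem_bigU.mpr (Or.inl hl), Or.inr ?_⟩
    have := h2 l hl
    rwa [assign_eq_prefix_len] at this
  obtain ⟨c1, c2, c3⟩ := chase_spec π hnd accF D₀ L2 a1 hG0
    (fun l hl => absurd hl (Finset.notMem_empty l))
    hL2d (List.mem_append_right _ (List.mem_singleton.mpr rfl))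
    (fun vr hvr => List.mem_append_left _ (a4 vr hvr))
  set Df : Clause := (chase accF D₀).1 with hDf
  set st2 : List Clause := (chase accF D₀).2 with hst2
  have hacc2F : ∀ vr ∈ accF, ∀ l ∈ vr.2, l.1 ≠ vr.1 → π l.1 < π vr.1 := by
    intro vr hvr l hl hlne
    rcases a1 vr hvr with ⟨p', b', hp', htp', hvb', hlits'⟩
    exact (hlits' l hl hlne).1
  have hvarsaccF := chase_vars_acc (π := π) (G := D₀) hacc2F a2
  have hsubset : Df ⊆ D := by
    intro l hl
    have hlU : l ∈ U := (c1 l hl).1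
    have hnV : l.1 ∉ VV := by
      intro hmem
      rcases List.mem_map.mp (a5 l.1 hmem) with ⟨vr, hvr, hvrl⟩
      apply hvarsaccF vr hvr
      rw [hvrl]
      exact Finset.mem_image.mpr ⟨l, hl, rfl⟩
    rw [h5]
    exact Finset.mem_filter.mpr ⟨hlU, hnV⟩
  refine ⟨L2 ++ st2, Df, c2, c3, hsubset, ?_⟩
  -- length bound
  have hrle : ρ.length ≤ unitCount t := by
    refine rho_length_le ?_ h4
    intro e he
    rcases (h3 e he).1 with ⟨hp, htp, _, _⟩
    exact ⟨hp, by rw [htp]⟩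
  have hslen : s.length = ρ.length := hperm.length_eq
  have hst2len : st2.length ≤ accF.length := chase_len accF D₀
  have hL1len : L1.length ≤ ρ.length * (1 + ρ.length) := by
    calc L1.length ≤ ([] : List Clause).length +
        s.length * (1 + ([] : List (Var × Clause)).length + s.length) := a7
      _ = ρ.length * (1 + ρ.length) := by simp [hslen]
  have haccFlen : accF.length = ρ.length := by
    simp only [List.length_nil, hslen] at a6
    omega
  have htot : (L2 ++ st2).length ≤ (ρ.length + 1) ^ 2 := by
    have : (L2 ++ st2).length = L1.length + 1 + st2.length := by
      simp only [hL2, List.length_append, List.length_cons, List.length_nil]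
    rw [this]
    have hsq : (ρ.length + 1) ^ 2 = ρ.length * (1 + ρ.length) + 1 + ρ.length := by ring
    rw [hsq]
    have h11 : st2.length ≤ ρ.length := by omega
    omega
  have hmono : (ρ.length + 1) ^ 2 ≤ (unitCount t + 1) ^ 2 :=
    Nat.pow_le_pow_left (by omega) 2
  omega
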